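/- Let X be a uniformly convex Banach space having the Opial property, and let C ⊆ X be a closed convex set (not necessarily bounded). Suppose T : C → C is α-nonexpansive for some multi-index α = (α₁, …, α_{n₀}) (with α₁ > 0, α_{n₀} > 0, α_j ≥ 0 for all j, and α₁ + ⋯ + α_{n₀} = 1), the fixed point set F(T) is nonempty, and T is asymptotically regular at some x ∈ C. Then the sequence of iterates (Tⁿx)ₙ converges weakly to some fixed point y₀ of T. -/

import Mathlib

open Filter Topology NormedSpace Set

section MP

variable {E : Type*} [NormedAddCommGroup E] [NormedSpace ℝ E]

/-- Bound the operator norm of a functional from its values on the ball of radius `r`. -/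
theorem opnorm_le_of_ball_bound (G : E →L[ℝ] ℝ) {r c : ℝ} (hr : 0 < r) (hc : 0 ≤ c)
    (h : ∀ u : E, ‖u‖ ≤ r → |G u| ≤ c) : ‖G‖ ≤ c / r := by
  refine G.opNorm_le_bound (by positivity) (fun u => ?_)
  rcases eq_or_ne u 0 with rfl | hu
  · simp
  · have hnu : 0 < ‖u‖ := norm_pos_iff.2 hu
    have h1 : ‖(r / ‖u‖) • u‖ ≤ r := by
      rw [norm_smul, Real.norm_eq_abs, abs_of_pos (by positivity)]
      field_simp
      exact le_rfl
    have h2 := h _ h1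
    rw [map_smul, smul_eq_mul, abs_mul, abs_of_pos (by positivity : (0:ℝ) < r / ‖u‖)] at h2
    rw [Real.norm_eq_abs]
    rw [div_mul_eq_mul_div, le_div_iff₀ hr]
    calc |G u| * r = (r / ‖u‖ * |G u|) * ‖u‖ := by field_simp
    _ ≤ c * ‖u‖ := by
        have := mul_le_mul_of_nonneg_right h2 (le_of_lt hnu)
        linarith

theorem uc_slice_small [UniformConvexSpace E] {ε : ℝ} (hε : 0 < ε) :
    ∃ δ : ℝ, 0 < δ ∧ ∀ (f : E →L[ℝ] ℝ), ‖f‖ ≤ 1 → ∀ a b : E, ‖a‖ ≤ 1 → ‖b‖ ≤ 1 →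
      1 - δ < f a → 1 - δ < f b → ‖a - b‖ ≤ ε := by
  obtain ⟨δ₀, hδ₀, H⟩ := exists_forall_closed_ball_dist_add_le_two_sub E hε
  refine ⟨δ₀ / 2, by positivity, fun f hf a b ha hb hfa hfb => ?_⟩
  by_contra hab
  push_neg at hab
  have h2 : ‖a + b‖ ≤ 2 - δ₀ := H ha hb hab.le
  have h3 : f (a + b) ≤ ‖a + b‖ := by
    calc f (a + b) ≤ |f (a + b)| := le_abs_self _
    _ ≤ ‖f‖ * ‖a + b‖ := by simpa [Real.norm_eq_abs] using f.le_opNorm (a + b)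
    _ ≤ 1 * ‖a + b‖ := mul_le_mul_of_nonneg_right hf (norm_nonneg _)
    _ = ‖a + b‖ := one_mul _
  rw [map_add] at h3
  linarith

/-- Finite-dimensional Goldstine lemma (Helly-type): any element of the bidual ball can be
approximately interpolated on finitely many functionals by an element of a slightly larger
ball of the space. -/
theorem goldstine_fin (L : StrongDual ℝ (StrongDual ℝ E)) (hL : ‖L‖ ≤ 1) {m : ℕ}
    (g : Fin m → StrongDual ℝ E) {r η : ℝ} (hr : 1 < r) (hη : 0 < η) :
    ∃ u : E, ‖u‖ ≤ r ∧ ∀ i, |g i u - L (g i)| ≤ η := by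
  classical
  set Φ : E →L[ℝ] (Fin m → ℝ) := ContinuousLinearMap.pi g with hΦ
  set V : Set (Fin m → ℝ) := Φ '' (Metric.closedBall (0:E) r) with hV
  set c : Fin m → ℝ := fun i => L (g i) with hc
  have hVconv : Convex ℝ V := by
    have := (convex_closedBall (0:E) r).linear_image (Φ : E →ₗ[ℝ] (Fin m → ℝ))
    simpa [hV] using this
  have hcmem : c ∈ closure V := by
    by_contra hcm
    obtain ⟨F, u₀, hFV, hFc⟩ :=
      geometric_hahn_banach_closed_point (hVconv.closure) isClosed_closure hcm
    -- hFV : ∀ v ∈ closure V, F v < u₀ ; hFc : u₀ < F c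
    have hball : ∀ u : E, ‖u‖ ≤ r → F (Φ u) < u₀ := by
      intro u hu
      exact hFV _ (subset_closure ⟨u, by simpa [Metric.mem_closedBall, dist_zero_right] using hu, rfl⟩)
    set lam : Fin m → ℝ := fun i => F (fun j => if i = j then (1:ℝ) else 0) with hlam
    have hFdec : ∀ v : Fin m → ℝ, F v = ∑ i, v i * lam i := by
      intro v
      conv_lhs => rw [pi_eq_sum_univ v, map_sum]
      refine Finset.sum_congr rfl (fun i _ => ?_)
      rw [map_smul]
      simp only [hlam, smul_eq_mul]
    set G : StrongDual ℝ E := ∑ i, lam i • g i with hG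
    have hGu : ∀ u : E, G u = F (Φ u) := by
      intro u
      rw [hFdec]
      simp only [hG, ContinuousLinearMap.sum_apply, ContinuousLinearMap.smul_apply,
        smul_eq_mul]
      refine Finset.sum_congr rfl (fun i _ => ?_)
      simp [hΦ, ContinuousLinearMap.pi_apply, mul_comm]
    have hLG : L G = F c := by
      rw [hFdec]
      simp only [hG, map_sum, map_smul, smul_eq_mul, hc]
      exact Finset.sum_congr rfl (fun i _ => by ring)
    have hr0 : (0:ℝ) < r := lt_trans one_pos hr
    have hu₀pos : 0 < u₀ := by
      have := hball 0 (by simp [le_of_lt hr0])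
      simpa [map_zero] using this
    have habs : ∀ u : E, ‖u‖ ≤ r → |G u| ≤ u₀ := by
      intro u hu
      have h1 : G u < u₀ := by rw [hGu]; exact hball u hu
      have h2 : G (-u) < u₀ := by rw [hGu]; exact hball (-u) (by simpa using hu)
      rw [map_neg] at h2
      rw [abs_le]
      constructor <;> linarith
    have hGnorm : ‖G‖ ≤ u₀ / r := opnorm_le_of_ball_bound G hr0 (le_of_lt hu₀pos) habs
    have hLGbound : |L G| ≤ u₀ / r := by
      calc |L G| ≤ ‖L‖ * ‖G‖ := by simpa [Real.norm_eq_abs] using L.le_opNorm G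
      _ ≤ 1 * (u₀ / r) := by
          apply mul_le_mul hL hGnorm (norm_nonneg _) zero_le_one
      _ = u₀ / r := one_mul _
    have : u₀ < u₀ / r := by
      calc u₀ < F c := hFc
      _ = L G := hLG.symm
      _ ≤ |L G| := le_abs_self _
      _ ≤ u₀ / r := hLGbound
    have : u₀ / r < u₀ := by
      rw [div_lt_iff₀ hr0]
      nlinarith
    linarith
  rw [Metric.mem_closure_iff] at hcmem
  obtain ⟨v, hvV, hdist⟩ := hcmem η hη
  obtain ⟨u, huball, rfl⟩ := hvV
  refine ⟨u, by simpa [Metric.mem_closedBall, dist_zero_right] using huball, fun i => ?_⟩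
  have := (dist_pi_lt_iff hη).1 hdist i
  rw [Real.dist_eq] at this
  have : |c i - Φ u i| ≤ η := le_of_lt (by simpa [dist_comm] using this)
  rw [abs_sub_comm] at this
  simpa [hΦ, hc, ContinuousLinearMap.pi_apply] using this

end MP
section MP2

variable {E : Type*} [NormedAddCommGroup E] [NormedSpace ℝ E] [CompleteSpace E]
  [UniformConvexSpace E]

theorem exists_near_norming (L : StrongDual ℝ (StrongDual ℝ E)) (hL : ‖L‖ = 1) {β : ℝ} (hβ : 0 < β) :
    ∃ f : StrongDual ℝ E, ‖f‖ ≤ 1 ∧ 1 - β < L f := by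
  by_cases h1 : (1:ℝ) - β < 0
  · exact ⟨0, by simp, by simpa using h1⟩
  push_neg at h1
  by_contra hcon
  push_neg at hcon
  have hb : ∀ f : StrongDual ℝ E, ‖f‖ ≤ 1 → |L f| ≤ 1 - β := by
    intro f hf
    have h2 := hcon f hf
    have h3 := hcon (-f) (by simpa using hf)
    rw [map_neg] at h3
    rw [abs_le]; constructor <;> linarith
  have := opnorm_le_of_ball_bound L one_pos h1 (fun f hf => hb f hf)
  rw [hL] at this
  simp only [div_one] at this
  linarith

theorem bidual_surjective_unit (L : StrongDual ℝ (StrongDual ℝ E)) (hL : ‖L‖ = 1) :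
    ∃ y : E, ∀ f : StrongDual ℝ E, f y = L f := by
  classical
  -- moduli of convexity for ε = 1/(m+1)
  have hslice : ∀ m : ℕ, ∃ δ : ℝ, 0 < δ ∧ ∀ (f : E →L[ℝ] ℝ), ‖f‖ ≤ 1 →
      ∀ a b : E, ‖a‖ ≤ 1 → ‖b‖ ≤ 1 → 1 - δ < f a → 1 - δ < f b →
      ‖a - b‖ ≤ 1 / (m + 1) := by
    intro m
    exact uc_slice_small (by positivity)
  choose δ hδpos hδ using hslice
  -- a positive sequence below all earlier δ's and below 1/(m+1)
  set θ : ℕ → ℝ := fun m => min ((Finset.range (m + 1)).inf' (by simp) δ) (1 / (m + 1)) with hθ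
  have hθpos : ∀ m, 0 < θ m := by
    intro m
    apply lt_min
    · rw [Finset.lt_inf'_iff]
      exact fun i _ => hδpos i
    · positivity
  have hθle : ∀ i m, i ≤ m → θ m ≤ δ i := by
    intro i m him
    exact le_trans (min_le_left _ _) (Finset.inf'_le _ (by simp [Nat.lt_succ_iff, him]))
  have hθsmall : ∀ m, θ m ≤ 1 / (m + 1) := fun m => min_le_right _ _
  -- near-norming functionals
  have hf : ∀ m : ℕ, ∃ f : StrongDual ℝ E, ‖f‖ ≤ 1 ∧ 1 - δ m / 8 < L f := by
    intro m
    exact exists_near_norming L hL (by linarith [hδpos m])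
  choose f hf1 hf2 using hf
  -- the runs via finite Goldstine
  have hrun : ∀ (h : StrongDual ℝ E) (m : ℕ), ∃ u : E, ‖u‖ ≤ 1 + θ m / 8 ∧
      (∀ i, i ≤ m → |f i u - L (f i)| ≤ θ m / 8) ∧ |h u - L h| ≤ θ m / 8 := by
    intro h m
    have hθm := hθpos m
    obtain ⟨u, hu1, hu2⟩ := goldstine_fin L hL.le
      (fun i : Fin (m + 2) => if (i : ℕ) ≤ m then f i else h)
      (r := 1 + θ m / 8) (η := θ m / 8) (by linarith) (by linarith)
    refine ⟨u, hu1, fun i him => ?_, ?_⟩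
    · have := hu2 ⟨i, by omega⟩
      simpa [him] using this
    · have := hu2 ⟨m + 1, by omega⟩
      simpa using this
  choose b hb1 hb2 hb3 using hrun
  set a : StrongDual ℝ E → ℕ → E := fun h m => (1 + θ m / 8)⁻¹ • b h m with ha
  -- slice membership
  have hkey : ∀ (h : StrongDual ℝ E) (m i : ℕ), i ≤ m →
      ‖a h m‖ ≤ 1 ∧ 1 - δ i < f i (a h m) := by
    intro h m i him
    have hθm := hθpos m
    have ht1 : θ m ≤ δ i := hθle i m him
    have hpos : (0:ℝ) < 1 + θ m / 8 := by linarith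
    constructor
    · rw [ha]
      simp only [norm_smul, Real.norm_eq_abs, abs_of_pos (inv_pos.2 hpos)]
      rw [inv_mul_le_iff₀ hpos, mul_one]
      exact hb1 h m
    · have hfb : 1 - δ i / 4 < f i (b h m) := by
        have h2 := hb2 h m i him
        have h3 := hf2 i
        have := abs_le.1 h2
        have hδi := hδpos i
        -- f i (b h m) ≥ L (f i) - θ m / 8 > 1 - δ i / 8 - δ i / 8 ≥ 1 - δ i / 4
        nlinarith [this.1, this.2]
      have : f i (a h m) = (1 + θ m / 8)⁻¹ * f i (b h m) := by
        rw [ha]; simp [map_smul, smul_eq_mul]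
      rw [this, lt_inv_mul_iff₀ hpos]
      have hδi := hδpos i
      nlinarith
  -- mixed Cauchy property
  have hcauchy : ∀ (h h' : StrongDual ℝ E) (m k i : ℕ), i ≤ m → i ≤ k →
      ‖a h m - a h' k‖ ≤ 1 / (i + 1) := by
    intro h h' m k i him hik
    obtain ⟨hm1, hm2⟩ := hkey h m i him
    obtain ⟨hk1, hk2⟩ := hkey h' k i hik
    exact hδ i (f i) (hf1 i) _ _ hm1 hk1 hm2 hk2
  -- the base run converges
  have hA : CauchySeq (a 0) := by
    rw [Metric.cauchySeq_iff]
    intro ε hε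
    obtain ⟨i, hi⟩ := exists_nat_one_div_lt hε
    refine ⟨i, fun m hm k hk => ?_⟩
    rw [dist_eq_norm]
    calc ‖a 0 m - a 0 k‖ ≤ 1 / (i + 1) := hcauchy 0 0 m k i hm hk
    _ < ε := by exact_mod_cast hi
  obtain ⟨y, hy⟩ := cauchySeq_tendsto_of_complete hA
  -- every run converges to y
  have hall : ∀ h : StrongDual ℝ E, Tendsto (a h) atTop (𝓝 y) := by
    intro h
    rw [tendsto_iff_dist_tendsto_zero]
    have hb : ∀ m : ℕ, dist (a h m) y ≤ 1 / (m + 1) + dist (a 0 m) y := by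
      intro m
      calc dist (a h m) y ≤ dist (a h m) (a 0 m) + dist (a 0 m) y := dist_triangle _ _ _
      _ ≤ 1 / (m + 1) + dist (a 0 m) y := by
          have := hcauchy h 0 m m m le_rfl le_rfl
          rw [dist_eq_norm]
          linarith
    refine squeeze_zero (fun m => dist_nonneg) hb ?_
    have h1 : Tendsto (fun m : ℕ => 1 / ((m : ℝ) + 1)) atTop (𝓝 0) :=
      tendsto_one_div_add_atTop_nhds_zero_nat
    have h2 : Tendsto (fun m => dist (a 0 m) y) atTop (𝓝 0) :=
      tendsto_iff_dist_tendsto_zero.1 hy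
    simpa using h1.add h2
  -- identify the limit
  refine ⟨y, fun h => ?_⟩
  have hθ0 : Tendsto θ atTop (𝓝 0) := by
    refine squeeze_zero (fun m => (hθpos m).le) hθsmall ?_
    exact tendsto_one_div_add_atTop_nhds_zero_nat
  have hbh : Tendsto (fun m => h (b h m)) atTop (𝓝 (L h)) := by
    rw [tendsto_iff_dist_tendsto_zero]
    refine squeeze_zero (fun m => dist_nonneg) (fun m => ?_) (by simpa using hθ0.div_const 8)
    rw [Real.dist_eq]
    exact hb3 h m
  have hfactor : Tendsto (fun m => (1 + θ m / 8)⁻¹) atTop (𝓝 1) := by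
    have : Tendsto (fun m => 1 + θ m / 8) atTop (𝓝 1) := by
      simpa using (tendsto_const_nhds (x := (1:ℝ)) (f := atTop)).add (hθ0.div_const 8)
    simpa using this.inv₀ one_ne_zero
  have hha : Tendsto (fun m => h (a h m)) atTop (𝓝 (L h)) := by
    have : (fun m => h (a h m)) = fun m => (1 + θ m / 8)⁻¹ * h (b h m) := by
      funext m
      rw [ha]; simp [map_smul, smul_eq_mul]
    rw [this]
    simpa using hfactor.mul hbh
  have hha' : Tendsto (fun m => h (a h m)) atTop (𝓝 (h y)) :=
    (h.continuous.tendsto y).comp (hall h)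
  exact tendsto_nhds_unique hha' hha

theorem bidual_surjective (L : StrongDual ℝ (StrongDual ℝ E)) :
    ∃ y : E, ∀ f : StrongDual ℝ E, f y = L f := by
  rcases eq_or_ne L 0 with rfl | hL
  · exact ⟨0, fun f => by simp⟩
  have hc : 0 < ‖L‖ := lt_of_le_of_ne (norm_nonneg L)
    (fun h0 => hL ((ContinuousLinearMap.opNorm_zero_iff L).mp h0.symm))
  obtain ⟨y', hy'⟩ := bidual_surjective_unit (‖L‖⁻¹ • L)
    (by rw [(NormedSpace.toNormSMulClass (𝕜 := ℝ) (E := StrongDual ℝ (StrongDual ℝ E))).norm_smul, Real.norm_eq_abs, abs_of_pos (inv_pos.2 hc), inv_mul_cancel₀ hc.ne'])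
  refine ⟨‖L‖ • y', fun f => ?_⟩
  have := hy' f
  rw [ContinuousLinearMap.smul_apply, smul_eq_mul] at this
  rw [map_smul, smul_eq_mul, this]
  field_simp

end MP2
section SEP

variable {Z : Type*} [NormedAddCommGroup Z] [NormedSpace ℝ Z]

theorem isSeparable_span_of_countable {s : Set Z} (hs : s.Countable) :
    TopologicalSpace.IsSeparable ((Submodule.span ℝ s : Submodule ℝ Z) : Set Z) := by
  classical
  haveI := hs.to_subtype
  have hrange : ∀ n : ℕ, TopologicalSpace.IsSeparable
      (Set.range (fun p : (Fin n → ℝ) × (Fin n → s) => ∑ i, p.1 i • (p.2 i : Z))) := by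
    intro n
    apply TopologicalSpace.isSeparable_range
    apply continuous_finset_sum
    intro i _
    exact (((continuous_apply i).comp continuous_fst)).smul
      (continuous_subtype_val.comp ((continuous_apply i).comp continuous_snd))
  have hsub : ((Submodule.span ℝ s : Submodule ℝ Z) : Set Z) ⊆
      ⋃ n : ℕ, Set.range (fun p : (Fin n → ℝ) × (Fin n → s) => ∑ i, p.1 i • (p.2 i : Z)) := by
    intro z hz
    rw [SetLike.mem_coe, Submodule.mem_span_set'] at hz
    obtain ⟨n, fcoef, gvec, hsum⟩ := hz
    exact Set.mem_iUnion.2 ⟨n, ⟨(fcoef, gvec), hsum⟩⟩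
  exact (TopologicalSpace.IsSeparable.iUnion hrange).mono hsub

theorem separable_of_dual_separable
    [TopologicalSpace.SeparableSpace (StrongDual ℝ Z)] :
    TopologicalSpace.SeparableSpace Z := by
  classical
  obtain ⟨D, hDc, hDd⟩ := TopologicalSpace.exists_countable_dense (StrongDual ℝ Z)
  -- near-norming points
  have hnorming : ∀ F : StrongDual ℝ Z, ∃ x : Z, ‖x‖ ≤ 1 ∧ ‖F‖ / 2 ≤ F x := by
    intro F
    rcases eq_or_ne F 0 with rfl | hF
    · exact ⟨0, by simp, by simp⟩
    have hFpos : 0 < ‖F‖ := lt_of_le_of_ne (norm_nonneg F)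
      (fun h0 => hF ((ContinuousLinearMap.opNorm_zero_iff F).mp h0.symm))
    by_contra hcon
    push_neg at hcon
    have hb : ∀ x : Z, ‖x‖ ≤ 1 → |F x| ≤ ‖F‖ / 2 := by
      intro x hx
      rcases le_or_gt (F x) (‖F‖ / 2) with h | h
      · rcases le_or_gt (-(‖F‖/2)) (F x) with h' | h'
        · rw [abs_le]; exact ⟨h', h⟩
        · have h2 := hcon (-x) (by simpa using hx)
          rw [map_neg] at h2
          linarith
      · exact absurd (le_of_lt h) (not_le.2 (hcon x hx))
    have := opnorm_le_of_ball_bound F one_pos (by positivity) hb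
    simp only [div_one] at this
    linarith
  choose ξ hξ1 hξ2 using hnorming
  set s : Set Z := ξ '' D with hs
  have hsc : s.Countable := hDc.image _
  set G : Submodule ℝ Z := (Submodule.span ℝ s).topologicalClosure with hG
  have hGsep : TopologicalSpace.IsSeparable (G : Set Z) := by
    have h1 := (isSeparable_span_of_countable hsc).closure
    have h2 : (G : Set Z) = closure ((Submodule.span ℝ s : Submodule ℝ Z) : Set Z) :=
      Submodule.topologicalClosure_coe _
    rw [h2]; exact h1
  have hGtop : ∀ z : Z, z ∈ G := by
    by_contra hcon
    push_neg at hcon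
    obtain ⟨z, hz⟩ := hcon
    obtain ⟨Φ, u₀, hΦz, hΦG⟩ := geometric_hahn_banach_point_closed
      (Submodule.convex G) (Submodule.isClosed_topologicalClosure _) hz
    -- Φ z < u₀ < Φ b for b ∈ G; hence Φ vanishes on G and u₀ < 0
    have hΦ0 : ∀ b ∈ G, Φ b = 0 := by
      intro b hb
      by_contra hb0
      have hscale : ∀ t : ℝ, u₀ < t * Φ b := by
        intro t
        have := hΦG (t • b) (G.smul_mem t hb)
        rwa [map_smul, smul_eq_mul] at this
      have := hscale ((u₀ - 1) / Φ b)
      rw [div_mul_cancel₀ _ hb0] at this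
      linarith
    have hu₀neg : u₀ < 0 := by
      have := hΦG 0 (G.zero_mem)
      rw [map_zero] at this
      have h0 : Φ (0:Z) = 0 := map_zero Φ
      linarith [hΦ0 0 G.zero_mem]
    have hΦne : Φ ≠ 0 := by
      intro h0
      rw [h0] at hΦz
      simp at hΦz
      linarith
    have hΦpos : 0 < ‖Φ‖ := lt_of_le_of_ne (norm_nonneg Φ)
      (fun h0 => hΦne ((ContinuousLinearMap.opNorm_zero_iff Φ).mp h0.symm))
    set Ψ : StrongDual ℝ Z := ‖Φ‖⁻¹ • Φ with hΨ
    have hΨnorm : ‖Ψ‖ = 1 := by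
      rw [hΨ, (NormedSpace.toNormSMulClass (𝕜 := ℝ) (E := StrongDual ℝ Z)).norm_smul, Real.norm_eq_abs, abs_of_pos (inv_pos.2 hΦpos),
        inv_mul_cancel₀ hΦpos.ne']
    have hΨ0 : ∀ b ∈ G, Ψ b = 0 := by
      intro b hb
      rw [hΨ, ContinuousLinearMap.smul_apply, hΦ0 b hb, smul_zero]
    -- approximate Ψ by an element of D
    have : Ψ ∈ closure D := hDd Ψ
    rw [Metric.mem_closure_iff] at this
    obtain ⟨F, hFD, hdist⟩ := this (1/4) (by norm_num)
    have hFnorm : 3/4 ≤ ‖F‖ := by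
      have h1 : ‖Ψ - F‖ < 1/4 := by rwa [← dist_eq_norm]
      have h2 := norm_sub_norm_le Ψ F
      rw [hΨnorm] at h2
      linarith
    have hxF : ξ F ∈ G := by
      apply Submodule.le_topologicalClosure
      apply Submodule.subset_span
      exact ⟨F, hFD, rfl⟩
    have h3 : 3/8 ≤ F (ξ F) := le_trans (by linarith) (hξ2 F)
    have h4 : Ψ (ξ F) = 0 := hΨ0 _ hxF
    have h5 : |F (ξ F) - Ψ (ξ F)| ≤ ‖F - Ψ‖ * ‖ξ F‖ := by
      have := (F - Ψ).le_opNorm (ξ F)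
      simpa [Real.norm_eq_abs, ContinuousLinearMap.sub_apply] using this
    have h6 : ‖F - Ψ‖ < 1/4 := by rwa [← dist_eq_norm, dist_comm]
    have h7 : ‖F - Ψ‖ * ‖ξ F‖ ≤ 1/4 * 1 := by
      apply mul_le_mul (le_of_lt h6) (hξ1 F) (norm_nonneg _) (by norm_num)
    rw [h4, sub_zero] at h5
    have := le_abs_self (F (ξ F))
    linarith
  have huniv : TopologicalSpace.IsSeparable (Set.univ : Set Z) := by
    have : (Set.univ : Set Z) ⊆ (G : Set Z) := fun z _ => hGtop z
    exact hGsep.mono this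
  exact TopologicalSpace.isSeparable_univ_iff.mp huniv

end SEP
section EXT

variable {E : Type*} [NormedAddCommGroup E] [NormedSpace ℝ E] [CompleteSpace E]
  [UniformConvexSpace E]

theorem dual_separable [TopologicalSpace.SeparableSpace E] :
    TopologicalSpace.SeparableSpace (StrongDual ℝ E) := by
  have hsurj : Function.Surjective (fun y : E => inclusionInDoubleDual ℝ E y) := by
    intro L
    obtain ⟨y, hy⟩ := bidual_surjective L
    exact ⟨y, ContinuousLinearMap.ext fun f => by
      simpa [NormedSpace.dual_def] using hy f⟩
  haveI : TopologicalSpace.SeparableSpace (StrongDual ℝ (StrongDual ℝ E)) :=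
    hsurj.denseRange.separableSpace (inclusionInDoubleDual ℝ E).continuous
  exact separable_of_dual_separable (Z := StrongDual ℝ E)

theorem weak_subseq [TopologicalSpace.SeparableSpace E]
    (w : ℕ → E) (M : ℝ) (hM : ∀ k, ‖w k‖ ≤ M) :
    ∃ (z : E) (φ : ℕ → ℕ), StrictMono φ ∧
      ∀ g : E →L[ℝ] ℝ, Tendsto (fun k => g (w (φ k))) atTop (𝓝 (g z)) := by
  classical
  haveI := dual_separable (E := E)
  have hM0 : 0 ≤ M := le_trans (norm_nonneg (w 0)) (hM 0)
  obtain ⟨D, hDc, hDd⟩ := TopologicalSpace.exists_countable_dense (StrongDual ℝ E)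
  obtain ⟨seq, hseq⟩ := hDc.exists_eq_range hDd.nonempty
  set K : Set (ℕ → ℝ) := Set.pi Set.univ (fun i : ℕ => Set.Icc (-(‖seq i‖ * M + 1)) (‖seq i‖ * M + 1)) with hK
  have hKc : IsCompact K := isCompact_univ_pi (fun i => isCompact_Icc)
  set F : ℕ → (ℕ → ℝ) := fun k i => seq i (w k) with hF
  have hFK : ∀ k, F k ∈ K := by
    intro k
    rw [hK, Set.mem_univ_pi]
    intro i
    have h1 : |seq i (w k)| ≤ ‖seq i‖ * M := by
      calc |seq i (w k)| ≤ ‖seq i‖ * ‖w k‖ := by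
            simpa [Real.norm_eq_abs] using (seq i).le_opNorm (w k)
      _ ≤ ‖seq i‖ * M := mul_le_mul_of_nonneg_left (hM k) (norm_nonneg _)
    rw [Set.mem_Icc]
    have := abs_le.1 h1
    constructor <;> linarith [this.1, this.2]
  obtain ⟨ℓ, _, φ, hφ, hconv⟩ := hKc.tendsto_subseq hFK
  have hcoord : ∀ i, Tendsto (fun k => seq i (w (φ k))) atTop (𝓝 (ℓ i)) := by
    intro i
    have := tendsto_pi_nhds.1 hconv i
    exact this
  have hcau : ∀ g : E →L[ℝ] ℝ, CauchySeq (fun k => g (w (φ k))) := by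
    intro g
    rw [Metric.cauchySeq_iff]
    intro ε hε
    have hε3 : 0 < ε / (3 * (M + 1)) := by positivity
    obtain ⟨d, hdD, hdist⟩ := (Metric.mem_closure_iff.1 (hDd g)) _ hε3
    obtain ⟨i, rfl⟩ : ∃ i, seq i = d := by
      have : d ∈ Set.range seq := hseq ▸ hdD
      obtain ⟨i, hi⟩ := this
      exact ⟨i, hi⟩
    have hgd : ∀ k, |g (w k) - seq i (w k)| ≤ ε / 3 := by
      intro k
      have h1 : |(g - seq i) (w k)| ≤ ‖g - seq i‖ * ‖w k‖ := by
        simpa [Real.norm_eq_abs] using (g - seq i).le_opNorm (w k)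
      have h2 : ‖g - seq i‖ * ‖w k‖ ≤ ‖g - seq i‖ * M :=
        mul_le_mul_of_nonneg_left (hM k) (norm_nonneg _)
      have h3 : ‖g - seq i‖ ≤ ε / (3 * (M + 1)) := by
        rw [← dist_eq_norm] at *
        exact le_of_lt hdist
      have h4 : ‖g - seq i‖ * M ≤ ε / (3 * (M + 1)) * M :=
        mul_le_mul_of_nonneg_right h3 hM0
      have h5 : ε / (3 * (M + 1)) * M ≤ ε / 3 := by
        rw [div_mul_eq_mul_div, div_le_div_iff₀ (by positivity) (by positivity)]
        nlinarith
      have h6 : (g - seq i) (w k) = g (w k) - seq i (w k) := by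
        simp [ContinuousLinearMap.sub_apply]
      rw [h6] at h1
      linarith
    have hcc : CauchySeq (fun k => seq i (w (φ k))) := (hcoord i).cauchySeq
    rw [Metric.cauchySeq_iff] at hcc
    obtain ⟨N, hN⟩ := hcc (ε / 3) (by positivity)
    refine ⟨N, fun m hm k hk => ?_⟩
    have h7 := hN m hm k hk
    rw [Real.dist_eq] at h7 ⊢
    have h8 := hgd (φ m)
    have h9 := hgd (φ k)
    calc |g (w (φ m)) - g (w (φ k))| ≤
        |g (w (φ m)) - seq i (w (φ m))| + |seq i (w (φ m)) - seq i (w (φ k))|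
          + |seq i (w (φ k)) - g (w (φ k))| := by
          have := abs_sub_le (g (w (φ m))) (seq i (w (φ m))) (g (w (φ k)))
          have h10 := abs_sub_le (seq i (w (φ m))) (seq i (w (φ k))) (g (w (φ k)))
          linarith
    _ < ε / 3 + ε / 3 + ε / 3 := by
        have h11 : |seq i (w (φ k)) - g (w (φ k))| ≤ ε / 3 := by
          rw [abs_sub_comm]; exact h9
        have h12 : |g (w (φ m)) - seq i (w (φ m))| ≤ ε / 3 := h8
        linarith
    _ = ε := by ring
  have hlim0 : ∀ g : E →L[ℝ] ℝ, ∃ c : ℝ, Tendsto (fun k => g (w (φ k))) atTop (𝓝 c) :=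
    fun g => cauchySeq_tendsto_of_complete (hcau g)
  choose lim hlim using hlim0
  have hadd : ∀ g h : E →L[ℝ] ℝ, lim (g + h) = lim g + lim h := by
    intro g h
    refine tendsto_nhds_unique (hlim (g + h)) ?_
    have := (hlim g).add (hlim h)
    simpa [ContinuousLinearMap.add_apply] using this
  have hsmul : ∀ (c : ℝ) (g : E →L[ℝ] ℝ), lim (c • g) = c * lim g := by
    intro c g
    refine tendsto_nhds_unique (hlim (c • g)) ?_
    have := (hlim g).const_mul c
    simpa [ContinuousLinearMap.smul_apply, smul_eq_mul] using this
  have hbound : ∀ g : E →L[ℝ] ℝ, |lim g| ≤ M * ‖g‖ := by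
    intro g
    have h1 : Tendsto (fun k => |g (w (φ k))|) atTop (𝓝 |lim g|) := (hlim g).abs
    refine le_of_tendsto h1 (Filter.Eventually.of_forall fun k => ?_)
    calc |g (w (φ k))| ≤ ‖g‖ * ‖w (φ k)‖ := by
          simpa [Real.norm_eq_abs] using g.le_opNorm (w (φ k))
    _ ≤ ‖g‖ * M := mul_le_mul_of_nonneg_left (hM _) (norm_nonneg _)
    _ = M * ‖g‖ := mul_comm _ _
  set Λ : (E →L[ℝ] ℝ) →ₗ[ℝ] ℝ :=
    { toFun := lim
      map_add' := hadd
      map_smul' := hsmul } with hΛ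
  set L : StrongDual ℝ (StrongDual ℝ E) := LinearMap.mkContinuous Λ M
    (fun g => by simpa [hΛ, Real.norm_eq_abs] using hbound g) with hL
  obtain ⟨z, hz⟩ := bidual_surjective L
  refine ⟨z, φ, hφ, fun g => ?_⟩
  have h1 : g z = lim g := by
    have := hz g
    rw [hL, LinearMap.mkContinuous_apply] at this
    simpa [hΛ] using this
  rw [h1]
  exact hlim g

end EXT
theorem submodule_uniformConvexSpace {X : Type*} [NormedAddCommGroup X] [NormedSpace ℝ X]
    [UniformConvexSpace X] (p : Submodule ℝ X) : UniformConvexSpace p := by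
  constructor
  intro ε hε
  obtain ⟨δ, hδ, H⟩ := exists_forall_sphere_dist_add_le_two_sub X hε
  refine ⟨δ, hδ, fun a ha b hb hab => ?_⟩
  have h1 : ‖(a : X)‖ = 1 := by rw [← Submodule.coe_norm]; exact ha
  have h2 : ‖(b : X)‖ = 1 := by rw [← Submodule.coe_norm]; exact hb
  have h3 : ε ≤ ‖(a : X) - (b : X)‖ := by
    rw [← Submodule.coe_sub, ← Submodule.coe_norm]; exact hab
  have := H h1 h2 h3
  rw [Submodule.coe_norm, Submodule.coe_add]
  exact this

/-- A sequence `u` converges weakly to `y` in a normed space. -/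
def WeakConvSeq {X : Type*} [NormedAddCommGroup X] [NormedSpace ℝ X]
    (u : ℕ → X) (y : X) : Prop :=
  ∀ f : X →L[ℝ] ℝ, Filter.Tendsto (fun n => f (u n)) Filter.atTop (nhds (f y))

/-- A normed space has the Opial property: whenever a sequence converges weakly
to `u₀`, then `liminf ‖uₙ - u₀‖ < liminf ‖uₙ - v‖` for every `v ≠ u₀`. -/
def OpialSpace (X : Type*) [NormedAddCommGroup X] [NormedSpace ℝ X] : Prop :=
  ∀ (u : ℕ → X) (u₀ : X), WeakConvSeq u u₀ →
    ∀ v : X, v ≠ u₀ →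
      Filter.liminf (fun n => ‖u n - u₀‖) Filter.atTop <
        Filter.liminf (fun n => ‖u n - v‖) Filter.atTop

set_option maxHeartbeats 1600000 in
theorem weak_convergence_of_mean_nonexpansive_unbounded
    {X : Type*} [NormedAddCommGroup X] [NormedSpace ℝ X] [CompleteSpace X]
    [UniformConvexSpace X] (hX_opial : OpialSpace X)
    (C : Set X) (hC_closed : IsClosed C) (hC_convex : Convex ℝ C)
    (T : X → X) (hT : Set.MapsTo T C C)
    (n₀ : ℕ) (hn₀ : 0 < n₀) (α : Fin n₀ → ℝ)
    (hα_nonneg : ∀ j, 0 ≤ α j)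
    (hα_first : 0 < α ⟨0, hn₀⟩)
    (hα_last : 0 < α ⟨n₀ - 1, by omega⟩)
    (hα_sum : ∑ j, α j = 1)
    (hne : ∀ x ∈ C, ∀ y ∈ C,
      ∑ j : Fin n₀, α j * ‖T^[(j : ℕ) + 1] x - T^[(j : ℕ) + 1] y‖ ≤ ‖x - y‖)
    (hF : ∃ z ∈ C, T z = z)
    (x : X) (hx : x ∈ C)
    (har : Filter.Tendsto (fun n => ‖T^[n] x - T^[n + 1] x‖) Filter.atTop (nhds 0)) :
    ∃ y₀ ∈ C, T y₀ = y₀ ∧ WeakConvSeq (fun n => T^[n] x) y₀ := by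
  classical
  set u : ℕ → X := fun n => T^[n] x with hu
  set s : ℕ → ℝ := fun n => ‖u n - u (n + 1)‖ with hs
  have har' : Filter.Tendsto s Filter.atTop (nhds 0) := har
  have hs0 : ∀ n, 0 ≤ s n := fun n => norm_nonneg _
  have huC : ∀ n, u n ∈ C := by
    intro n
    induction n with
    | zero => simpa [hu] using hx
    | succ n ih =>
      have h1 : u (n + 1) = T (u n) := by
        simp only [hu, Function.iterate_succ_apply']
      rw [h1]
      exact hT ih
  have hiter : ∀ n k : ℕ, T^[k] (u n) = u (n + k) := by
    intro n k
    have h1 : T^[k] (T^[n] x) = T^[k + n] x := (Function.iterate_add_apply T k n x).symm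
    simp only [hu]
    rw [h1, Nat.add_comm]
  have hCiter : ∀ n : ℕ, ∀ a ∈ C, T^[n] a ∈ C := by
    intro n
    induction n with
    | zero => intro a ha; simpa using ha
    | succ n ih =>
      intro a ha
      rw [Function.iterate_succ_apply']
      exact hT (ih a ha)
  -- the first weight
  set α₀ : ℝ := α ⟨0, hn₀⟩ with hα₀
  -- one-step Lipschitz bound
  have hlip1 : ∀ a ∈ C, ∀ b ∈ C, ‖T a - T b‖ ≤ α₀⁻¹ * ‖a - b‖ := by
    intro a ha b hb
    have h1 := hne a ha b hb
    have h2 : α ⟨0, hn₀⟩ * ‖T^[(0:ℕ) + 1] a - T^[(0:ℕ) + 1] b‖ ≤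
        ∑ j : Fin n₀, α j * ‖T^[(j : ℕ) + 1] a - T^[(j : ℕ) + 1] b‖ := by
      apply Finset.single_le_sum (f := fun j : Fin n₀ => α j * ‖T^[(j : ℕ) + 1] a - T^[(j : ℕ) + 1] b‖)
      · intro j _
        exact mul_nonneg (hα_nonneg j) (norm_nonneg _)
      · exact Finset.mem_univ _
    simp only [Function.iterate_one, zero_add, pow_one] at h2
    rw [← hα₀] at h2
    rw [inv_mul_eq_div, le_div_iff₀ hα_first]
    calc ‖T a - T b‖ * α₀ = α₀ * ‖T a - T b‖ := mul_comm _ _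
    _ ≤ ∑ j : Fin n₀, α j * ‖T^[(j : ℕ) + 1] a - T^[(j : ℕ) + 1] b‖ := h2
    _ ≤ ‖a - b‖ := h1
  have hα₀inv : 0 < α₀⁻¹ := inv_pos.2 hα_first
  have hlip : ∀ k : ℕ, ∀ a ∈ C, ∀ b ∈ C, ‖T^[k] a - T^[k] b‖ ≤ α₀⁻¹ ^ k * ‖a - b‖ := by
    intro k
    induction k with
    | zero => intro a _ b _; simp
    | succ k ih =>
      intro a ha b hb
      rw [Function.iterate_succ_apply', Function.iterate_succ_apply']
      calc ‖T (T^[k] a) - T (T^[k] b)‖ ≤ α₀⁻¹ * ‖T^[k] a - T^[k] b‖ :=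
            hlip1 _ (hCiter k a ha) _ (hCiter k b hb)
      _ ≤ α₀⁻¹ * (α₀⁻¹ ^ k * ‖a - b‖) :=
            mul_le_mul_of_nonneg_left (ih a ha b hb) hα₀inv.le
      _ = α₀⁻¹ ^ (k + 1) * ‖a - b‖ := by ring
  -- key inequality for fixed points
  have hkey : ∀ z, z ∈ C → T z = z → ∀ m,
      ∑ j : Fin n₀, α j * ‖u (m + ((j : ℕ) + 1)) - z‖ ≤ ‖u m - z‖ := by
    intro z hzC hzT m
    have h := hne (u m) (huC m) z hzC
    calc ∑ j : Fin n₀, α j * ‖u (m + ((j : ℕ) + 1)) - z‖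
        = ∑ j : Fin n₀, α j * ‖T^[(j : ℕ) + 1] (u m) - T^[(j : ℕ) + 1] z‖ := by
          refine Finset.sum_congr rfl fun j _ => ?_
          rw [hiter m ((j : ℕ) + 1), Function.iterate_fixed hzT ((j : ℕ) + 1)]
    _ ≤ ‖u m - z‖ := h
  -- within any window of length n₀ the distance does not increase
  have hstep : ∀ z, z ∈ C → T z = z → ∀ m,
      ∃ jj, 1 ≤ jj ∧ jj ≤ n₀ ∧ ‖u (m + jj) - z‖ ≤ ‖u m - z‖ := by
    intro z hzC hzT m
    by_contra hcon
    push_neg at hcon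
    have hlt : ∀ j : Fin n₀, ‖u m - z‖ < ‖u (m + ((j : ℕ) + 1)) - z‖ := by
      intro j
      exact hcon _ (by omega) (by omega)
    have h2 : ∑ j : Fin n₀, α j * ‖u m - z‖ < ∑ j : Fin n₀, α j * ‖u (m + ((j : ℕ) + 1)) - z‖ := by
      apply Finset.sum_lt_sum
      · intro j _
        exact mul_le_mul_of_nonneg_left (hlt j).le (hα_nonneg j)
      · exact ⟨⟨0, hn₀⟩, Finset.mem_univ _, mul_lt_mul_of_pos_left (hlt _) hα_first⟩
    rw [← Finset.sum_mul, hα_sum, one_mul] at h2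
    linarith [hkey z hzC hzT m]
  -- difference control
  have habs : ∀ (z : X) (n : ℕ), |‖u (n + 1) - z‖ - ‖u n - z‖| ≤ s n := by
    intro z n
    have h1 := abs_norm_sub_norm_le (u (n + 1) - z) (u n - z)
    have h2 : (u (n + 1) - z) - (u n - z) = -(u n - u (n + 1)) := by abel
    rw [h2, norm_neg] at h1
    exact h1
  have hsumIco : ∀ (z : X) (p n : ℕ), p ≤ n →
      ‖u n - z‖ ≤ ‖u p - z‖ + ∑ k ∈ Finset.Ico p n, s k := by
    intro z p n hpn
    induction n, hpn using Nat.le_induction with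
    | base => simp
    | succ n hpn ih =>
      have h1 := habs z n
      have h2 := abs_le.1 h1
      rw [Finset.sum_Ico_succ_top hpn]
      linarith [h2.2]
  -- s is bounded
  obtain ⟨S, hS0, hSb⟩ : ∃ S : ℝ, 0 ≤ S ∧ ∀ n, s n ≤ S := by
    obtain ⟨N, hN⟩ := (Metric.tendsto_atTop.1 har') 1 one_pos
    refine ⟨1 + ∑ i ∈ Finset.range (N + 1), s i, by positivity, fun n => ?_⟩
    rcases le_or_gt n N with h | h
    · have h1 : s n ≤ ∑ i ∈ Finset.range (N + 1), s i :=
        Finset.single_le_sum (fun i _ => hs0 i) (Finset.mem_range.2 (by omega))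
      linarith
    · have h2 := hN n h.le
      rw [Real.dist_eq, sub_zero, abs_of_nonneg (hs0 n)] at h2
      have h3 : (0:ℝ) ≤ ∑ i ∈ Finset.range (N + 1), s i :=
        Finset.sum_nonneg (fun i _ => hs0 i)
      linarith
  -- chain lemma
  have hchain : ∀ z, z ∈ C → T z = z → ∀ m n, m ≤ n →
      ∃ p, m ≤ p ∧ p ≤ n ∧ ‖u p - z‖ ≤ ‖u m - z‖ ∧ n < p + n₀ := by
    intro z hzC hzT m n hmn
    induction n, hmn using Nat.le_induction with
    | base => exact ⟨m, le_rfl, le_rfl, le_rfl, by omega⟩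
    | succ n hmn ih =>
      obtain ⟨p, hp1, hp2, hp3, hp4⟩ := ih
      by_cases hcase : n + 1 < p + n₀
      · exact ⟨p, hp1, by omega, hp3, hcase⟩
      · obtain ⟨jj, hj1, hj2, hj3⟩ := hstep z hzC hzT p
        exact ⟨p + jj, by omega, by omega, le_trans hj3 hp3, by omega⟩
  -- boundedness of distances to a fixed point
  have hdbnd : ∀ z, z ∈ C → T z = z → ∀ n, ‖u n - z‖ ≤ ‖u 0 - z‖ + n₀ * S := by
    intro z hzC hzT n
    obtain ⟨p, hp1, hp2, hp3, hp4⟩ := hchain z hzC hzT 0 n (Nat.zero_le n)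
    have h1 := hsumIco z p n hp2
    have h2 : ∑ k ∈ Finset.Ico p n, s k ≤ (n - p : ℕ) * S := by
      have := Finset.sum_le_card_nsmul (Finset.Ico p n) s S (fun k _ => hSb k)
      rwa [Nat.card_Ico, nsmul_eq_mul] at this
    have h3 : ((n - p : ℕ) : ℝ) ≤ (n₀ : ℝ) := by
      have : n - p ≤ n₀ := by omega
      exact_mod_cast this
    have h4 : ((n - p : ℕ) : ℝ) * S ≤ (n₀ : ℝ) * S := mul_le_mul_of_nonneg_right h3 hS0
    linarith
  -- existence of the limit of ‖u n - z‖ for fixed points z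
  have hfixlim : ∀ z, z ∈ C → T z = z →
      ∃ dz : ℝ, Filter.Tendsto (fun n => ‖u n - z‖) Filter.atTop (nhds dz) := by
    intro z hzC hzT
    set d : ℕ → ℝ := fun n => ‖u n - z‖ with hd
    have hd0 : ∀ n, 0 ≤ d n := fun n => norm_nonneg _
    have hbddle : Filter.IsBoundedUnder (· ≤ ·) Filter.atTop d :=
      Filter.isBoundedUnder_of ⟨‖u 0 - z‖ + n₀ * S, fun n => hdbnd z hzC hzT n⟩
    have hbddge : Filter.IsBoundedUnder (· ≥ ·) Filter.atTop d :=
      Filter.isBoundedUnder_of ⟨0, hd0⟩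
    set l : ℝ := Filter.liminf d Filter.atTop with hl
    refine ⟨l, ?_⟩
    rw [Metric.tendsto_atTop]
    intro ε hε
    have hn₀pos : (0:ℝ) < (n₀ : ℝ) + 1 := by positivity
    obtain ⟨N₁, hN₁⟩ : ∃ N₁, ∀ k ≥ N₁, s k < ε / (2 * ((n₀ : ℝ) + 1)) := by
      obtain ⟨N₁, hN₁⟩ := (Metric.tendsto_atTop.1 har') (ε / (2 * ((n₀ : ℝ) + 1))) (by positivity)
      refine ⟨N₁, fun k hk => ?_⟩
      have := hN₁ k hk
      rwa [Real.dist_eq, sub_zero, abs_of_nonneg (hs0 k)] at this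
    have hfreq : ∃ᶠ n in Filter.atTop, d n < l + ε / 2 := by
      apply Filter.frequently_lt_of_liminf_lt
      · exact hbddle.isCoboundedUnder_ge
      · rw [← hl]; linarith
    obtain ⟨m, hm₂, hm₁⟩ := (hfreq.and_eventually (Filter.eventually_ge_atTop N₁)).exists
    have hup : ∀ n, m ≤ n → d n < l + ε := by
      intro n hn
      obtain ⟨p, hp1, hp2, hp3, hp4⟩ := hchain z hzC hzT m n hn
      have h1 := hsumIco z p n hp2
      have h2 : ∑ k ∈ Finset.Ico p n, s k ≤ (n - p : ℕ) * (ε / (2 * ((n₀ : ℝ) + 1))) := by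
        apply le_trans (Finset.sum_le_card_nsmul (Finset.Ico p n) s _
          (fun k hk => (hN₁ k (by
            have := (Finset.mem_Ico.1 hk).1
            omega)).le))
        rw [Nat.card_Ico, nsmul_eq_mul]
      have h3 : ((n - p : ℕ) : ℝ) ≤ (n₀ : ℝ) := by
        have : n - p ≤ n₀ := by omega
        exact_mod_cast this
      have h4 : ((n - p : ℕ) : ℝ) * (ε / (2 * ((n₀ : ℝ) + 1))) ≤
          (n₀ : ℝ) * (ε / (2 * ((n₀ : ℝ) + 1))) :=
        mul_le_mul_of_nonneg_right h3 (by positivity)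
      have h5 : (n₀ : ℝ) * (ε / (2 * ((n₀ : ℝ) + 1))) ≤ ε / 2 := by
        rw [mul_comm, div_mul_eq_mul_div, div_le_div_iff₀ (by positivity) two_pos]
        nlinarith [hε.le, Nat.cast_nonneg (α := ℝ) n₀]
      have h6 : d p ≤ d m := hp3
      have h7 : d n ≤ d p + ∑ k ∈ Finset.Ico p n, s k := h1
      linarith
    have hlow : ∀ᶠ n in Filter.atTop, l - ε < d n := by
      apply Filter.eventually_lt_of_lt_liminf
      · rw [← hl]; linarith
      · exact hbddge
    obtain ⟨N₂, hN₂⟩ := Filter.eventually_atTop.1 hlow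
    refine ⟨max m N₂, fun n hn => ?_⟩
    have h8 := hup n (le_trans (le_max_left _ _) hn)
    have h9 := hN₂ n (le_trans (le_max_right _ _) hn)
    rw [Real.dist_eq, abs_lt]
    constructor <;> linarith
  -- global bound on the sequence
  obtain ⟨z₀, hz₀C, hz₀T⟩ := hF
  obtain ⟨M, hMu⟩ : ∃ M : ℝ, ∀ n, ‖u n‖ ≤ M := by
    refine ⟨‖z₀‖ + (‖u 0 - z₀‖ + n₀ * S), fun n => ?_⟩
    have h1 := hdbnd z₀ hz₀C hz₀T n
    have h2 : ‖u n‖ ≤ ‖u n - z₀‖ + ‖z₀‖ := by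
      calc ‖u n‖ = ‖(u n - z₀) + z₀‖ := by rw [sub_add_cancel]
      _ ≤ ‖u n - z₀‖ + ‖z₀‖ := norm_add_le _ _
    linarith
  have hM0 : 0 ≤ M := le_trans (norm_nonneg _) (hMu 0)
  -- separable closed subspace containing the orbit
  set Ysub : Submodule ℝ X := (Submodule.span ℝ (Set.range u)).topologicalClosure with hY
  have hYclosed : IsClosed (Ysub : Set X) := Submodule.isClosed_topologicalClosure _
  haveI hYcomp : CompleteSpace Ysub := hYclosed.completeSpace_coe
  haveI hYuc : UniformConvexSpace Ysub := submodule_uniformConvexSpace Ysub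
  haveI hYsep : TopologicalSpace.SeparableSpace Ysub := by
    have h1 := isSeparable_span_of_countable (Z := X) (Set.countable_range u)
    have h2 : (Ysub : Set X) =
        closure ((Submodule.span ℝ (Set.range u) : Submodule ℝ X) : Set X) :=
      Submodule.topologicalClosure_coe _
    have h3 : TopologicalSpace.IsSeparable (Ysub : Set X) := by rw [h2]; exact h1.closure
    exact h3.separableSpace
  have huY : ∀ n, u n ∈ Ysub :=
    fun n => Submodule.le_topologicalClosure _ (Submodule.subset_span ⟨n, rfl⟩)
  -- gap bound from asymptotic regularity
  have hgap : ∀ n k : ℕ, ‖u n - u (n + k)‖ ≤ ∑ i ∈ Finset.range k, s (n + i) := by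
    intro n k
    induction k with
    | zero => simp
    | succ k ih =>
      have h1 : ‖u n - u (n + (k + 1))‖ ≤ ‖u n - u (n + k)‖ + ‖u (n + k) - u (n + k + 1)‖ := by
        have := dist_triangle (u n) (u (n + k)) (u (n + k + 1))
        simpa [dist_eq_norm, ← add_assoc] using this
      rw [Finset.sum_range_succ]
      have h2 : s (n + k) = ‖u (n + k) - u (n + k + 1)‖ := rfl
      linarith
  -- demiclosedness at fixed points via the Opial property
  have hdemi : ∀ z, z ∈ C → ∀ ψ : ℕ → ℕ, StrictMono ψ →
      (∀ f : X →L[ℝ] ℝ, Filter.Tendsto (fun k => f (u (ψ k))) Filter.atTop (nhds (f z))) →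
      T z = z := by
    intro z hzC ψ hψ hweak
    by_contra hTz
    set v : ℕ → X := fun k => u (ψ k) with hv
    have hvC : ∀ k, v k ∈ C := fun k => huC _
    have hψtop : Filter.Tendsto ψ Filter.atTop Filter.atTop := hψ.tendsto_atTop
    have hreg : ∀ j : Fin n₀, Filter.Tendsto
        (fun k => ‖v k - T^[(j : ℕ) + 1] (v k)‖) Filter.atTop (nhds 0) := by
      intro j
      apply squeeze_zero (fun k => norm_nonneg _)
        (g := fun k => ∑ i ∈ Finset.range ((j : ℕ) + 1), s (ψ k + i))
      · intro k
        show ‖u (ψ k) - T^[(j : ℕ) + 1] (u (ψ k))‖ ≤ _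
        rw [hiter (ψ k) ((j : ℕ) + 1)]
        exact hgap (ψ k) _
      · have hterm : ∀ i : ℕ, Filter.Tendsto (fun k => s (ψ k + i)) Filter.atTop (nhds 0) := by
          intro i
          exact har'.comp (tendsto_atTop_mono (fun k => Nat.le_add_right (ψ k) i) hψtop)
        have hsum := tendsto_finset_sum (Finset.range ((j : ℕ) + 1))
          (fun i _ => hterm i)
        simpa using hsum
    have hMz : ∀ k, ‖v k - z‖ ≤ M + ‖z‖ := by
      intro k
      calc ‖v k - z‖ ≤ ‖v k‖ + ‖z‖ := norm_sub_le _ _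
      _ ≤ M + ‖z‖ := by have h9 : ‖v k‖ ≤ M := hMu (ψ k); linarith
    set B1 : Fin n₀ → ℝ := fun j => α₀⁻¹ ^ ((j : ℕ) + 1) * (M + ‖z‖) with hB1
    set B2 : Fin n₀ → ℝ := fun j => M + ‖T^[(j : ℕ) + 1] z‖ with hB2
    set A : ℕ → ((Fin n₀ → ℝ) × ((Fin n₀ → ℝ) × ℝ)) := fun k =>
      (fun j => ‖T^[(j : ℕ) + 1] (v k) - T^[(j : ℕ) + 1] z‖,
        (fun j => ‖v k - T^[(j : ℕ) + 1] z‖, ‖v k - z‖)) with hA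
    set K : Set ((Fin n₀ → ℝ) × ((Fin n₀ → ℝ) × ℝ)) :=
      (Set.univ.pi fun j => Set.Icc (-(B1 j)) (B1 j)) ×ˢ
        ((Set.univ.pi fun j => Set.Icc (-(B2 j)) (B2 j)) ×ˢ
          Set.Icc (-(M + ‖z‖)) (M + ‖z‖)) with hKdef
    have hKc : IsCompact K := (isCompact_univ_pi fun j => isCompact_Icc).prod
      ((isCompact_univ_pi fun j => isCompact_Icc).prod isCompact_Icc)
    have hAK : ∀ k, A k ∈ K := by
      intro k
      refine ⟨?_, ?_, ?_⟩
      · rw [Set.mem_univ_pi]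
        intro j
        have hb : ‖T^[(j : ℕ) + 1] (v k) - T^[(j : ℕ) + 1] z‖ ≤ B1 j := by
          calc ‖T^[(j : ℕ) + 1] (v k) - T^[(j : ℕ) + 1] z‖
              ≤ α₀⁻¹ ^ ((j : ℕ) + 1) * ‖v k - z‖ := hlip _ _ (hvC k) _ hzC
          _ ≤ B1 j := by
              simp only [hB1]
              exact mul_le_mul_of_nonneg_left (hMz k) (pow_nonneg hα₀inv.le _)
        have hb0 : 0 ≤ B1 j := le_trans (norm_nonneg _) hb
        exact Set.mem_Icc.2 ⟨by linarith [norm_nonneg (T^[(j : ℕ) + 1] (v k) - T^[(j : ℕ) + 1] z)], hb⟩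
      · rw [Set.mem_univ_pi]
        intro j
        have hb : ‖v k - T^[(j : ℕ) + 1] z‖ ≤ B2 j := by
          calc ‖v k - T^[(j : ℕ) + 1] z‖ ≤ ‖v k‖ + ‖T^[(j : ℕ) + 1] z‖ := norm_sub_le _ _
          _ ≤ B2 j := by
              have h9 : ‖v k‖ ≤ M := hMu (ψ k)
              simp only [hB2]
              linarith
        have hb0 : 0 ≤ B2 j := le_trans (norm_nonneg _) hb
        exact Set.mem_Icc.2 ⟨by linarith [norm_nonneg (v k - T^[(j : ℕ) + 1] z)], hb⟩
      · have hb := hMz k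
        exact Set.mem_Icc.2 ⟨by linarith [norm_nonneg (v k - z)], hb⟩
    obtain ⟨P, _, ρ, hρ, hconv⟩ := hKc.tendsto_subseq hAK
    have hc1 : ∀ j : Fin n₀, Filter.Tendsto
        (fun k => ‖T^[(j : ℕ) + 1] (v (ρ k)) - T^[(j : ℕ) + 1] z‖)
        Filter.atTop (nhds (P.1 j)) := by
      intro j
      have hfst : Filter.Tendsto (fun k => (A (ρ k)).1) Filter.atTop (nhds P.1) :=
        (continuous_fst.tendsto P).comp hconv
      exact tendsto_pi_nhds.1 hfst j
    have hc2 : ∀ j : Fin n₀, Filter.Tendsto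
        (fun k => ‖v (ρ k) - T^[(j : ℕ) + 1] z‖) Filter.atTop (nhds (P.2.1 j)) := by
      intro j
      have hsnd : Filter.Tendsto (fun k => (A (ρ k)).2.1) Filter.atTop (nhds P.2.1) :=
        (continuous_fst.tendsto P.2).comp ((continuous_snd.tendsto P).comp hconv)
      exact tendsto_pi_nhds.1 hsnd j
    have hc3 : Filter.Tendsto (fun k => ‖v (ρ k) - z‖) Filter.atTop (nhds P.2.2) :=
      (continuous_snd.tendsto P.2).comp ((continuous_snd.tendsto P).comp hconv)
    have hweak' : WeakConvSeq (fun k => v (ρ k)) z :=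
      fun f => (hweak f).comp hρ.tendsto_atTop
    have hbl : ∀ j : Fin n₀, T^[(j : ℕ) + 1] z ≠ z → P.2.2 < P.2.1 j := by
      intro j hnej
      have hop := hX_opial (fun k => v (ρ k)) z hweak' (T^[(j : ℕ) + 1] z) hnej
      rwa [hc3.liminf_eq, (hc2 j).liminf_eq] at hop
    have hbe : ∀ j : Fin n₀, T^[(j : ℕ) + 1] z = z → P.2.1 j = P.2.2 := by
      intro j heq
      refine tendsto_nhds_unique (hc2 j) ?_
      have : (fun k => ‖v (ρ k) - T^[(j : ℕ) + 1] z‖) = fun k => ‖v (ρ k) - z‖ := by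
        funext k; rw [heq]
      rw [this]
      exact hc3
    have hcb : ∀ j : Fin n₀, P.2.1 j ≤ P.1 j := by
      intro j
      have hpt : ∀ k, ‖v (ρ k) - T^[(j : ℕ) + 1] z‖ ≤
          ‖v (ρ k) - T^[(j : ℕ) + 1] (v (ρ k))‖ +
            ‖T^[(j : ℕ) + 1] (v (ρ k)) - T^[(j : ℕ) + 1] z‖ := by
        intro k
        have := dist_triangle (v (ρ k)) (T^[(j : ℕ) + 1] (v (ρ k))) (T^[(j : ℕ) + 1] z)
        simpa [dist_eq_norm] using this
      have hlim : Filter.Tendsto (fun k =>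
          ‖v (ρ k) - T^[(j : ℕ) + 1] (v (ρ k))‖ +
            ‖T^[(j : ℕ) + 1] (v (ρ k)) - T^[(j : ℕ) + 1] z‖) Filter.atTop
          (nhds (0 + P.1 j)) := ((hreg j).comp hρ.tendsto_atTop).add (hc1 j)
      have := le_of_tendsto_of_tendsto' (hc2 j) hlim hpt
      simpa using this
    have hineq : ∑ j : Fin n₀, α j * P.1 j ≤ P.2.2 := by
      have hlhs : Filter.Tendsto (fun k => ∑ j : Fin n₀,
          α j * ‖T^[(j : ℕ) + 1] (v (ρ k)) - T^[(j : ℕ) + 1] z‖) Filter.atTop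
          (nhds (∑ j : Fin n₀, α j * P.1 j)) :=
        tendsto_finset_sum _ (fun j _ => (hc1 j).const_mul (α j))
      exact le_of_tendsto_of_tendsto' hlhs hc3
        (fun k => hne (v (ρ k)) (hvC (ρ k)) z hzC)
    have hjl : ∀ j : Fin n₀, P.2.2 ≤ P.1 j := by
      intro j
      rcases eq_or_ne (T^[(j : ℕ) + 1] z) z with heq | hnej
      · rw [← hbe j heq]; exact hcb j
      · exact le_trans (hbl j hnej).le (hcb j)
    have hstrict : P.2.2 < P.1 ⟨0, hn₀⟩ := by
      have h0 : T^[((⟨0, hn₀⟩ : Fin n₀) : ℕ) + 1] z ≠ z := by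
        simpa [Function.iterate_one] using hTz
      exact lt_of_lt_of_le (hbl _ h0) (hcb _)
    have hsum2 : ∑ j : Fin n₀, α j * P.2.2 < ∑ j : Fin n₀, α j * P.1 j := by
      apply Finset.sum_lt_sum
      · intro j _
        exact mul_le_mul_of_nonneg_left (hjl j) (hα_nonneg j)
      · exact ⟨⟨0, hn₀⟩, Finset.mem_univ _, mul_lt_mul_of_pos_left hstrict hα_first⟩
    rw [← Finset.sum_mul, hα_sum, one_mul] at hsum2
    linarith
  -- extraction of a weakly convergent subsequence with fixed-point limit
  have hEXT : ∀ ψ : ℕ → ℕ, StrictMono ψ → ∃ z, z ∈ C ∧ T z = z ∧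
      ∃ ρ : ℕ → ℕ, StrictMono ρ ∧
        ∀ f : X →L[ℝ] ℝ, Filter.Tendsto (fun k => f (u (ψ (ρ k)))) Filter.atTop (nhds (f z)) := by
    intro ψ hψ
    obtain ⟨z', ρ, hρ, hg⟩ := weak_subseq (E := Ysub) (fun k => ⟨u (ψ k), huY _⟩) M
      (fun k => by simpa using hMu (ψ k))
    set z : X := (z' : X) with hz
    have hweak : ∀ f : X →L[ℝ] ℝ,
        Filter.Tendsto (fun k => f (u (ψ (ρ k)))) Filter.atTop (nhds (f z)) := by
      intro f
      have := hg (f.comp Ysub.subtypeL)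
      simpa using this
    have hzC : z ∈ C := by
      by_contra hzc
      obtain ⟨f, c0, hfz, hfC⟩ := geometric_hahn_banach_point_closed hC_convex hC_closed hzc
      have h2 : c0 ≤ f z := ge_of_tendsto (hweak f)
        (Filter.Eventually.of_forall fun k => (hfC _ (huC _)).le)
      linarith
    exact ⟨z, hzC, hdemi z hzC (fun k => ψ (ρ k)) (hψ.comp hρ) hweak, ρ, hρ, hweak⟩
  -- first extraction : the candidate weak limit
  obtain ⟨z, hzC, hzT, ρ₁, hρ₁, hw₁⟩ := hEXT id strictMono_id
  obtain ⟨dz, hdz⟩ := hfixlim z hzC hzT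
  refine ⟨z, hzC, hzT, fun f => ?_⟩
  by_contra hnot
  rw [Metric.tendsto_atTop] at hnot
  push_neg at hnot
  obtain ⟨ε, hε, hfr⟩ := hnot
  obtain ⟨ψ, hψ, hψP⟩ := Nat.exists_strictMono_subsequence (P := fun n => ε ≤ dist (f (u n)) (f z))
    (fun N => by
      obtain ⟨n, hn1, hn2⟩ := hfr (N + 1)
      exact ⟨n, by omega, hn2⟩)
  obtain ⟨z', hz'C, hz'T, ρ₂, hρ₂, hw₂⟩ := hEXT ψ hψ
  obtain ⟨dz', hdz'⟩ := hfixlim z' hz'C hz'T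
  by_cases hzz : z' = z
  · have h1 : Filter.Tendsto (fun k => dist (f (u (ψ (ρ₂ k)))) (f z)) Filter.atTop
        (nhds (dist (f z') (f z))) := (hw₂ f).dist tendsto_const_nhds
    have h2 : ε ≤ dist (f z') (f z) :=
      ge_of_tendsto h1 (Filter.Eventually.of_forall fun k => hψP (ρ₂ k))
    rw [hzz, dist_self] at h2
    linarith
  · have hw₁' : WeakConvSeq (fun k => u (ρ₁ k)) z := by
      intro g
      simpa using hw₁ g
    have hw₂' : WeakConvSeq (fun k => u (ψ (ρ₂ k))) z' := fun g => hw₂ g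
    have hlim1 : Filter.liminf (fun k => ‖u (ρ₁ k) - z‖) Filter.atTop = dz :=
      (hdz.comp hρ₁.tendsto_atTop).liminf_eq
    have hlim2 : Filter.liminf (fun k => ‖u (ρ₁ k) - z'‖) Filter.atTop = dz' :=
      (hdz'.comp hρ₁.tendsto_atTop).liminf_eq
    have hlim3 : Filter.liminf (fun k => ‖u (ψ (ρ₂ k)) - z'‖) Filter.atTop = dz' :=
      (hdz'.comp ((hψ.comp hρ₂).tendsto_atTop)).liminf_eq
    have hlim4 : Filter.liminf (fun k => ‖u (ψ (ρ₂ k)) - z‖) Filter.atTop = dz :=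
      (hdz.comp ((hψ.comp hρ₂).tendsto_atTop)).liminf_eq
    have hOp1 := hX_opial (fun k => u (ρ₁ k)) z hw₁' z' hzz
    have hOp2 := hX_opial (fun k => u (ψ (ρ₂ k))) z' hw₂' z (fun h => hzz h.symm)
    rw [hlim1, hlim2] at hOp1
    rw [hlim3, hlim4] at hOp2
    linarith
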